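/- Let VQ_n = L ⊙ R (n ≥ 2) with L = VQ^0_{n-1} and R = VQ^1_{n-1}, let x_L and y_L be two vertices in L, and let x_R and y_R be their unique neighbors in R, respectively. If n is not a multiple of 3, then the distance between x_L and y_L in the subgraph L equals the distance between x_R and y_R in the subgraph R; if n is a multiple of 3, then these two distances differ by at most 2. -/

import Mathlib

/-- The relation `I = {(00,00),(01,01),(10,11),(11,10)}` on pairs of bits,
where a pair `(a, b)` records two consecutive bits (higher bit first). -/
def vqCross (p q : Bool × Bool) : Prop :=
  (p = (false, false) ∧ q = (false, false)) ∨
  (p = (false, true) ∧ q = (false, true)) ∨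
  (p = (true, false) ∧ q = (true, true)) ∨
  (p = (true, true) ∧ q = (true, false))

/-- Adjacency in the varietal hypercube `VQ n`.  A vertex is a function
`Fin n → Bool`, the bit `x_k` (1-indexed, `x = x_n x_{n-1} ⋯ x_1`) being
the value at index `k - 1`; the leading bit `x_n` is at index `n - 1`. -/
def vqAdj : (n : ℕ) → (Fin n → Bool) → (Fin n → Bool) → Prop
  | 0, _, _ => False
  | 1, x, y => x ≠ y
  | (n + 2), x, y =>
    if x (Fin.last (n + 1)) = y (Fin.last (n + 1)) then
      -- both in the same copy of `VQ (n+1)`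
      vqAdj (n + 1) (fun i => x i.castSucc) (fun i => y i.castSucc)
    else
      if 3 ∣ (n + 2) then
        (∀ i : Fin (n + 2), i.val < n - 1 → x i = y i) ∧
        vqCross (x ⟨n, by omega⟩, x ⟨n - 1, by omega⟩)
          (y ⟨n, by omega⟩, y ⟨n - 1, by omega⟩)
      else
        ∀ i : Fin (n + 1), x i.castSucc = y i.castSucc

/-- The `n`-dimensional varietal hypercube `VQ_n`. -/
def varietalCube (n : ℕ) : SimpleGraph (Fin n → Bool) :=
  SimpleGraph.fromRel (vqAdj n)

open SimpleGraph

lemma vqCross_symm {p q : Bool × Bool} (h : vqCross p q) : vqCross q p := by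
  unfold vqCross at *; tauto

def vqFlip (m : ℕ) (v : Fin (m + 2) → Bool) : Fin (m + 2) → Bool :=
  fun i => if i = Fin.last (m + 1) then !(v i) else v i

lemma vqFlip_castSucc (m : ℕ) (v : Fin (m + 2) → Bool) (i : Fin (m + 1)) :
    vqFlip m v i.castSucc = v i.castSucc := by
  simp [vqFlip, (Fin.castSucc_lt_last i).ne]

lemma vqFlip_last (m : ℕ) (v : Fin (m + 2) → Bool) :
    vqFlip m v (Fin.last (m + 1)) = !(v (Fin.last (m + 1))) := by simp [vqFlip]

lemma vqFlip_lt (m : ℕ) (v : Fin (m + 2) → Bool) (i : Fin (m + 2)) (h : i.val < m + 1) :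
    vqFlip m v i = v i := by
  have : i ≠ Fin.last (m + 1) := by simp [Fin.ext_iff]; omega
  simp [vqFlip, this]

lemma vqFlip_vqFlip (m : ℕ) (v : Fin (m + 2) → Bool) : vqFlip m (vqFlip m v) = v := by
  funext i
  unfold vqFlip
  split <;> simp_all

lemma vqAdj_flip (m : ℕ) (u v : Fin (m + 2) → Bool) (h : vqAdj (m + 2) u v) :
    vqAdj (m + 2) (vqFlip m u) (vqFlip m v) := by
  have hres_u : (fun i : Fin (m+1) => vqFlip m u i.castSucc) = fun i => u i.castSucc := by
    funext i; exact vqFlip_castSucc m u i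
  have hres_v : (fun i : Fin (m+1) => vqFlip m v i.castSucc) = fun i => v i.castSucc := by
    funext i; exact vqFlip_castSucc m v i
  rw [vqAdj] at h ⊢
  rw [vqFlip_last, vqFlip_last, hres_u, hres_v]
  by_cases hl : u (Fin.last (m+1)) = v (Fin.last (m+1))
  · rw [if_pos hl] at h
    rw [if_pos (by rw [hl])]
    exact h
  · rw [if_neg hl] at h
    rw [if_neg (by simpa using hl)]
    by_cases h3 : 3 ∣ (m + 2)
    · rw [if_pos h3] at h ⊢
      obtain ⟨h1, h2⟩ := h
      refine ⟨fun i hi => ?_, ?_⟩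
      · rw [vqFlip_lt m u i (by omega), vqFlip_lt m v i (by omega)]
        exact h1 i hi
      · rw [vqFlip_lt m u _ (by show m < m + 1; omega), vqFlip_lt m u _ (by show m - 1 < m + 1; omega),
          vqFlip_lt m v _ (by show m < m + 1; omega), vqFlip_lt m v _ (by show m - 1 < m + 1; omega)]
        exact h2
    · rw [if_neg h3] at h ⊢
      intro i
      rw [vqFlip_castSucc, vqFlip_castSucc]
      exact h i

lemma vqAdj_top_flip (k : ℕ) (h3 : ¬ 3 ∣ (k + 1)) (u v : Fin (k + 1) → Bool)
    (hne : u (Fin.last k) ≠ v (Fin.last k))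
    (heq : ∀ i : Fin k, u i.castSucc = v i.castSucc) : vqAdj (k + 1) u v := by
  match k with
  | 0 =>
    rw [vqAdj]
    intro h
    exact hne (congrFun h _)
  | (k + 1) =>
    rw [vqAdj, if_neg hne, if_neg h3]
    exact heq

lemma vqAdj_lift (m : ℕ) (u v : Fin (m + 2) → Bool)
    (hl : u (Fin.last (m + 1)) = v (Fin.last (m + 1)))
    (h : vqAdj (m + 1) (fun i => u i.castSucc) (fun i => v i.castSucc)) :
    vqAdj (m + 2) u v := by
  rw [vqAdj, if_pos hl]; exact h

lemma adj_flip (m : ℕ) (u v : Fin (m + 2) → Bool) :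
    (varietalCube (m + 2)).Adj (vqFlip m u) (vqFlip m v) ↔ (varietalCube (m + 2)).Adj u v := by
  have key : ∀ a b : Fin (m + 2) → Bool,
      (varietalCube (m + 2)).Adj a b → (varietalCube (m + 2)).Adj (vqFlip m a) (vqFlip m b) := by
    intro a b hab
    rw [varietalCube, fromRel_adj] at hab ⊢
    obtain ⟨hne, h⟩ := hab
    refine ⟨fun he => hne ?_, ?_⟩
    · have := congrArg (vqFlip m) he
      rwa [vqFlip_vqFlip, vqFlip_vqFlip] at this
    · exact h.imp (vqAdj_flip m a b) (vqAdj_flip m b a)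
  constructor
  · intro h
    have := key _ _ h
    rwa [vqFlip_vqFlip, vqFlip_vqFlip] at this
  · exact key u v

lemma iso_edist_le {V W : Type*} {G : SimpleGraph V} {H : SimpleGraph W} (ψ : G ≃g H)
    (a b : V) : H.edist (ψ a) (ψ b) ≤ G.edist a b := by
  by_cases hr : G.Reachable a b
  · obtain ⟨p, hp⟩ := hr.exists_walk_length_eq_edist
    calc H.edist (ψ a) (ψ b) ≤ (p.map ψ.toHom).length := edist_le _
    _ = G.edist a b := by rw [Walk.length_map, hp]
  · rw [edist_eq_top_of_not_reachable hr]; exact le_top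

lemma iso_edist_eq {V W : Type*} {G : SimpleGraph V} {H : SimpleGraph W} (ψ : G ≃g H)
    (a b : V) : H.edist (ψ a) (ψ b) = G.edist a b := by
  refine le_antisymm (iso_edist_le ψ a b) ?_
  have := iso_edist_le ψ.symm (ψ a) (ψ b)
  simpa using this

lemma cross_structure (m : ℕ) (u v : Fin (m + 2) → Bool)
    (hu : u (Fin.last (m + 1)) = false) (hv : v (Fin.last (m + 1)) = true)
    (h : (varietalCube (m + 2)).Adj u v) :
    (¬ 3 ∣ (m + 2) → ∀ i : Fin (m + 1), u i.castSucc = v i.castSucc) ∧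
    (3 ∣ (m + 2) → (∀ i : Fin (m + 2), i.val < m - 1 → u i = v i) ∧
      vqCross (u ⟨m, by omega⟩, u ⟨m - 1, by omega⟩) (v ⟨m, by omega⟩, v ⟨m - 1, by omega⟩)) := by
  rw [varietalCube, fromRel_adj] at h
  have hne : u (Fin.last (m+1)) ≠ v (Fin.last (m+1)) := by rw [hu, hv]; simp
  obtain ⟨-, h | h⟩ := h
  · rw [vqAdj, if_neg hne] at h
    by_cases h3 : 3 ∣ (m + 2)
    · rw [if_pos h3] at h
      exact ⟨fun hc => absurd h3 hc, fun _ => h⟩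
    · rw [if_neg h3] at h
      exact ⟨fun _ => h, fun hc => absurd hc h3⟩
  · rw [vqAdj, if_neg (Ne.symm hne)] at h
    by_cases h3 : 3 ∣ (m + 2)
    · rw [if_pos h3] at h
      exact ⟨fun hc => absurd h3 hc,
        fun _ => ⟨fun i hi => (h.1 i hi).symm, vqCross_symm h.2⟩⟩
    · rw [if_neg h3] at h
      exact ⟨fun _ i => (h i).symm, fun hc => absurd hc h3⟩

lemma close_of_cross (m : ℕ) (h3 : 3 ∣ (m + 2)) (u v : Fin (m + 2) → Bool)
    (hu : u (Fin.last (m + 1)) = false) (hv : v (Fin.last (m + 1)) = true)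
    (h : (varietalCube (m + 2)).Adj u v) :
    vqFlip m u = v ∨ (varietalCube (m + 2)).Adj (vqFlip m u) v := by
  have hm1 : 1 ≤ m := by omega
  obtain ⟨hlow, hcr⟩ := (cross_structure m u v hu hv h).2 h3
  have hum : u ⟨m, by omega⟩ = v ⟨m, by omega⟩ := by
    rcases hcr with ⟨h1, h2⟩ | ⟨h1, h2⟩ | ⟨h1, h2⟩ | ⟨h1, h2⟩ <;>
      simp only [Prod.mk.injEq] at h1 h2 <;> rw [h1.1, h2.1]
  -- case analysis on whether the (m-1)-bits agree
  by_cases hsec : u ⟨m - 1, by omega⟩ = v ⟨m - 1, by omega⟩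
  · left
    funext i
    rcases Nat.lt_or_ge i.val (m - 1) with hi | hi
    · rw [vqFlip_lt m u i (by omega)]
      exact hlow i hi
    · rcases Nat.eq_or_lt_of_le hi with hi | hi
      · rw [vqFlip_lt m u i (by omega)]
        have : i = (⟨m - 1, by omega⟩ : Fin (m + 2)) := by simp [Fin.ext_iff]; omega
        rw [this]; exact hsec
      · rcases Nat.eq_or_lt_of_le hi with hi | hi
        · have : i = (⟨m, by omega⟩ : Fin (m + 2)) := by simp [Fin.ext_iff]; omega
          rw [vqFlip_lt m u i (by omega), this]; exact hum
        · have : i = Fin.last (m + 1) := by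
            simp [Fin.ext_iff]; omega
          rw [this, vqFlip_last, hu, hv]; rfl
  · right
    have hdiff : vqFlip m u ⟨m - 1, by omega⟩ ≠ v ⟨m - 1, by omega⟩ := by
      rw [vqFlip_lt m u _ (by show m - 1 < m + 1; omega)]
      exact hsec
    rw [varietalCube, fromRel_adj]
    refine ⟨fun he => hdiff (congrFun he _), Or.inl ?_⟩
    -- build vqAdj (m+2) (vqFlip m u) v by descending two levels
    obtain ⟨k, rfl⟩ : ∃ k, m = k + 1 := ⟨m - 1, by omega⟩
    apply vqAdj_lift
    · rw [vqFlip_last, hu, hv]; rfl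
    apply vqAdj_lift
    · show vqFlip (k+1) u ((Fin.last (k+1)).castSucc) = v ((Fin.last (k+1)).castSucc)
      rw [vqFlip_lt _ u _ (by show k + 1 < k + 2; omega)]
      exact hum
    apply vqAdj_top_flip
    · omega
    · show vqFlip (k+1) u (((Fin.last k).castSucc).castSucc) ≠ v (((Fin.last k).castSucc).castSucc)
      rw [vqFlip_lt _ u _ (by show k < k + 2; omega)]
      exact hsec
    · intro i
      show vqFlip (k+1) u (((i.castSucc).castSucc).castSucc) = v (((i.castSucc).castSucc).castSucc)
      rw [vqFlip_lt _ u _ (by show i.val < k + 2; omega)]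
      exact hlow _ (by show i.val < k + 1 - 1; omega)

/-- Let `VQ_n = L ⊙ R` (`n ≥ 2`), let `x_L, y_L ∈ L` and let `x_R, y_R ∈ R` be
their neighbors in `R`.  If `3 ∤ n` then `d_L(x_L, y_L) = d_R(x_R, y_R)`, and if
`3 ∣ n` these distances differ by at most `2`. -/
theorem stmt10 (n : ℕ) (hn : 2 ≤ n) (xL yL xR yR : Fin n → Bool)
    (hxL : xL ⟨n - 1, by omega⟩ = false) (hyL : yL ⟨n - 1, by omega⟩ = false)
    (hxR : xR ⟨n - 1, by omega⟩ = true) (hyR : yR ⟨n - 1, by omega⟩ = true)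
    (hx : (varietalCube n).Adj xL xR) (hy : (varietalCube n).Adj yL yR) :
    let L := (varietalCube n).induce {v : Fin n → Bool | v ⟨n - 1, by omega⟩ = false}
    let R := (varietalCube n).induce {v : Fin n → Bool | v ⟨n - 1, by omega⟩ = true}
    let dL := L.dist ⟨xL, hxL⟩ ⟨yL, hyL⟩
    let dR := R.dist ⟨xR, hxR⟩ ⟨yR, hyR⟩
    (¬ 3 ∣ n → dL = dR) ∧ (3 ∣ n → dL ≤ dR + 2 ∧ dR ≤ dL + 2) := by
  obtain ⟨m, rfl⟩ : ∃ m, n = m + 2 := ⟨n - 2, by omega⟩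
  intro L R dL dR
  have hxL' : xL (Fin.last (m + 1)) = false := hxL
  have hyL' : yL (Fin.last (m + 1)) = false := hyL
  have hxR' : xR (Fin.last (m + 1)) = true := hxR
  have hyR' : yR (Fin.last (m + 1)) = true := hyR
  -- the leading-bit-flip isomorphism L ≃g R
  let ψ : L ≃g R :=
    { toFun := fun a => ⟨vqFlip m a.1, by
        have h2 : a.1 (Fin.last (m + 1)) = false := a.2
        show vqFlip m a.1 (Fin.last (m + 1)) = true
        rw [vqFlip_last, h2]; rfl⟩
      invFun := fun a => ⟨vqFlip m a.1, by
        have h2 : a.1 (Fin.last (m + 1)) = true := a.2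
        show vqFlip m a.1 (Fin.last (m + 1)) = false
        rw [vqFlip_last, h2]; rfl⟩
      left_inv := fun a => Subtype.ext (vqFlip_vqFlip m a.1)
      right_inv := fun a => Subtype.ext (vqFlip_vqFlip m a.1)
      map_rel_iff' := fun {a b} => adj_flip m a.1 b.1 }
  constructor
  · -- 3 ∤ n
    intro h3
    have hxflip : vqFlip m xL = xR := by
      funext i
      refine Fin.lastCases ?_ (fun j => ?_) i
      · rw [vqFlip_last, hxL', hxR']; rfl
      · rw [vqFlip_castSucc]
        exact (cross_structure m xL xR hxL' hxR' hx).1 h3 j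
    have hyflip : vqFlip m yL = yR := by
      funext i
      refine Fin.lastCases ?_ (fun j => ?_) i
      · rw [vqFlip_last, hyL', hyR']; rfl
      · rw [vqFlip_castSucc]
        exact (cross_structure m yL yR hyL' hyR' hy).1 h3 j
    show L.dist ⟨xL, hxL⟩ ⟨yL, hyL⟩ = R.dist ⟨xR, hxR⟩ ⟨yR, hyR⟩
    have ex : (⟨xR, hxR⟩ : {v // v ∈ {v : Fin (m+2) → Bool | v ⟨m+2-1, by omega⟩ = true}}) =
        ψ ⟨xL, hxL⟩ := Subtype.ext hxflip.symm
    have ey : (⟨yR, hyR⟩ : {v // v ∈ {v : Fin (m+2) → Bool | v ⟨m+2-1, by omega⟩ = true}}) =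
        ψ ⟨yL, hyL⟩ := Subtype.ext hyflip.symm
    rw [ex, ey]
    show (L.edist _ _).toNat = (R.edist _ _).toNat
    rw [iso_edist_eq ψ]
  · -- 3 ∣ n
    intro h3
    have hex : R.edist (ψ ⟨xL, hxL⟩) ⟨xR, hxR⟩ ≤ 1 := by
      rcases close_of_cross m h3 xL xR hxL' hxR' hx with he | ha
      · rw [show (ψ ⟨xL, hxL⟩ : {v // v ∈ _}) = ⟨xR, hxR⟩ from Subtype.ext he]
        rw [edist_self]; exact zero_le_one
      · exact le_of_eq (edist_eq_one_iff_adj.mpr ha)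
    have hey : R.edist (ψ ⟨yL, hyL⟩) ⟨yR, hyR⟩ ≤ 1 := by
      rcases close_of_cross m h3 yL yR hyL' hyR' hy with he | ha
      · rw [show (ψ ⟨yL, hyL⟩ : {v // v ∈ _}) = ⟨yR, hyR⟩ from Subtype.ext he]
        rw [edist_self]; exact zero_le_one
      · exact le_of_eq (edist_eq_one_iff_adj.mpr ha)
    have hmid : R.edist (ψ ⟨xL, hxL⟩) (ψ ⟨yL, hyL⟩) = L.edist ⟨xL, hxL⟩ ⟨yL, hyL⟩ :=
      iso_edist_eq ψ _ _
    set a := L.edist ⟨xL, hxL⟩ ⟨yL, hyL⟩ with ha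
    set b := R.edist ⟨xR, hxR⟩ ⟨yR, hyR⟩ with hb
    have hab : a ≤ b + 2 := by
      calc a = R.edist (ψ ⟨xL, hxL⟩) (ψ ⟨yL, hyL⟩) := hmid.symm
      _ ≤ R.edist (ψ ⟨xL, hxL⟩) ⟨xR, hxR⟩ + R.edist ⟨xR, hxR⟩ (ψ ⟨yL, hyL⟩) :=
          SimpleGraph.edist_triangle
      _ ≤ R.edist (ψ ⟨xL, hxL⟩) ⟨xR, hxR⟩ +
          (R.edist ⟨xR, hxR⟩ ⟨yR, hyR⟩ + R.edist ⟨yR, hyR⟩ (ψ ⟨yL, hyL⟩)) := by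
          gcongr; exact SimpleGraph.edist_triangle
      _ ≤ 1 + (b + 1) := by
          gcongr
          rw [edist_comm]; exact hey
      _ = b + 2 := by ring
    have hba : b ≤ a + 2 := by
      calc b ≤ R.edist ⟨xR, hxR⟩ (ψ ⟨xL, hxL⟩) + R.edist (ψ ⟨xL, hxL⟩) ⟨yR, hyR⟩ :=
          SimpleGraph.edist_triangle
      _ ≤ R.edist ⟨xR, hxR⟩ (ψ ⟨xL, hxL⟩) +
          (R.edist (ψ ⟨xL, hxL⟩) (ψ ⟨yL, hyL⟩) + R.edist (ψ ⟨yL, hyL⟩) ⟨yR, hyR⟩) := by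
          gcongr; exact SimpleGraph.edist_triangle
      _ ≤ 1 + (a + 1) := by
          gcongr
          · rw [edist_comm]; exact hex
          · rw [hmid]
      _ = a + 2 := by ring
    show a.toNat ≤ b.toNat + 2 ∧ b.toNat ≤ a.toNat + 2
    have h2t : (2 : ℕ∞) ≠ ⊤ := by decide
    rcases eq_or_ne a ⊤ with htop | htop
    · have hbtop : b = ⊤ := by
        rw [htop, top_le_iff, ENat.add_eq_top] at hab
        exact hab.resolve_right h2t
      rw [htop, hbtop]; simp
    · have hbtop : b ≠ ⊤ := by
        intro hb'
        rw [hb', top_le_iff, ENat.add_eq_top] at hba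
        exact htop (hba.resolve_right h2t)
      have h2 : ((2 : ℕ∞)).toNat = 2 := rfl
      have hb2 : b + 2 ≠ ⊤ := WithTop.add_ne_top.mpr ⟨hbtop, h2t⟩
      have ha2 : a + 2 ≠ ⊤ := WithTop.add_ne_top.mpr ⟨htop, h2t⟩
      constructor
      · have := ENat.toNat_le_toNat hab hb2
        rwa [ENat.toNat_add hbtop h2t, h2] at this
      · have := ENat.toNat_le_toNat hba ha2
        rwa [ENat.toNat_add htop h2t, h2] at this
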